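/- arXiv:2502.18804 — 8 statements merged into one kernel-verified Lean document; each statement's English description precedes it below -/
import Mathlib

section
/- Let (A, [·,·], α) be a multiplicative Hom-Lie algebra. Define a trilinear bracket by ⟨x,y,z⟩ = [[x,y], α(z)]. Then (A, [·,·], ⟨·,·,·⟩, α) is a multiplicative Hom-Lie-Yamaguti algebra. -/
namespace HLYPaper

variable (K : Type*) [CommRing K]
variable {A V : Type*} [AddCommGroup A] [Module K A] [AddCommGroup V] [Module K V]

/-- A bilinear map (as a plain function). -/
def IsBilin (f : A → A → V) : Prop :=
  (∀ y, IsLinearMap K fun x => f x y) ∧ ∀ x, IsLinearMap K (f x)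

/-- A trilinear map (as a plain function). -/
def IsTrilin (f : A → A → A → V) : Prop :=
  (∀ y z, IsLinearMap K fun x => f x y z) ∧ (∀ x z, IsLinearMap K fun y => f x y z) ∧
    ∀ x y, IsLinearMap K (f x y)

/-- Hom-Lie algebra. -/
structure IsHomLie (b : A → A → A) (α : A → A) : Prop where
  lin : IsLinearMap K α
  bilin : IsBilin K b
  skew : ∀ x y, b x y = - b y x
  jacobi : ∀ x y z, b (α x) (b y z) + b (α y) (b z x) + b (α z) (b x y) = 0

/-- Multiplicative Hom-Lie algebra. -/
structure IsMultHomLie (b : A → A → A) (α : A → A) extends IsHomLie K b α : Prop where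
  mult : ∀ x y, α (b x y) = b (α x) (α y)

/-- Hom-Lie-Yamaguti algebra. -/
structure IsHLY (b : A → A → A) (t : A → A → A → A) (α : A → A) : Prop where
  lin : IsLinearMap K α
  bilin : IsBilin K b
  trilin : IsTrilin K t
  skew₂ : ∀ x y, b x y = - b y x
  skew₃ : ∀ x y z, t x y z = - t y x z
  ly1 : ∀ x y z,
    (b (b x y) (α z) + b (b y z) (α x) + b (b z x) (α y)) +
      (t x y z + t y z x + t z x y) = 0
  ly2 : ∀ x y z w,
    t (b x y) (α z) (α w) + t (b y z) (α x) (α w) + t (b z x) (α y) (α w) = 0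
  ly3 : ∀ x y z w,
    t (α x) (α y) (b z w) = b (t x y z) (α (α w)) + b (α (α z)) (t x y w)
  ly4 : ∀ x y z w u,
    t (α (α x)) (α (α y)) (t z w u) =
      t (t x y z) (α (α w)) (α (α u)) + t (α (α z)) (t x y w) (α (α u)) +
        t (α (α z)) (α (α w)) (t x y u)

/-- Multiplicative Hom-Lie-Yamaguti algebra. -/
structure IsMultHLY (b : A → A → A) (t : A → A → A → A) (α : A → A)
    extends IsHLY K b t α : Prop where
  mult₂ : ∀ x y, α (b x y) = b (α x) (α y)
  mult₃ : ∀ x y z, α (t x y z) = t (α x) (α y) (α z)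

/-- Representation of a Hom-Lie algebra. -/
structure IsHomLieRep (b : A → A → A) (α : A → A) (ρ : A → V → V) (β : V → V) : Prop where
  linβ : IsLinearMap K β
  linρ : ∀ v, IsLinearMap K fun x => ρ x v
  linρ' : ∀ x, IsLinearMap K (ρ x)
  comm : ∀ x v, ρ (α x) (β v) = β (ρ x v)
  rep : ∀ x y v, ρ (b x y) (β v) = ρ (α x) (ρ y v) - ρ (α y) (ρ x v)

/-- The operator `D(x,y)` built from `ρ` and `θ`. -/
def Dop (b : A → A → A) (α : A → A) (β : V → V) (ρ : A → V → V) (θ : A → A → V → V)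
    (x y : A) (v : V) : V :=
  θ y x v - θ x y v + ρ (α x) (ρ y v) - ρ (α y) (ρ x v) - ρ (b x y) (β v)

/-- Representation of a Hom-Lie-Yamaguti algebra. -/
structure IsHLYRep (b : A → A → A) (t : A → A → A → A) (α : A → A)
    (ρ : A → V → V) (θ : A → A → V → V) (β : V → V) : Prop where
  linβ : IsLinearMap K β
  linρ : ∀ v, IsLinearMap K fun x => ρ x v
  linρ' : ∀ x, IsLinearMap K (ρ x)
  linθ : ∀ z v, IsLinearMap K fun x => θ x z v
  linθ' : ∀ x v, IsLinearMap K fun z => θ x z v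
  linθ'' : ∀ x z, IsLinearMap K (θ x z)
  rl1 : ∀ x v, ρ (α x) (β v) = β (ρ x v)
  rl1' : ∀ x y v, θ (α x) (α y) (β v) = β (θ x y v)
  rl5 : ∀ x1 x2 x3 v,
    Dop b α β ρ θ (b x1 x2) (α x3) v + Dop b α β ρ θ (b x2 x3) (α x1) v +
      Dop b α β ρ θ (b x3 x1) (α x2) v = 0
  rl6 : ∀ x1 x2 y1 v,
    θ (b x1 x2) (α y1) (β v) = θ (α x1) (α y1) (ρ x2 v) - θ (α x2) (α y1) (ρ x1 v)
  rl7 : ∀ x1 x2 y2 v,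
    Dop b α β ρ θ (α x1) (α x2) (ρ y2 v) =
      ρ (α (α y2)) (Dop b α β ρ θ x1 x2 v) + ρ (t x1 x2 y2) (β v)
  rl8 : ∀ x1 y1 y2 v,
    θ (α x1) (b y1 y2) (β v) = ρ (α (α y1)) (θ x1 y2 v) - ρ (α (α y2)) (θ x1 y1 v)
  rl9 : ∀ x1 x2 y1 y2 v,
    Dop b α β ρ θ (α (α x1)) (α (α x2)) (θ y1 y2 v) =
      θ (α (α y1)) (α (α y2)) (Dop b α β ρ θ x1 x2 v) +
        θ (t x1 x2 y1) (α (α y2)) (β (β v)) + θ (α (α y1)) (t x1 x2 y2) (β (β v))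
  rl10 : ∀ x1 y1 y2 y3 v,
    θ (α (α x1)) (t y1 y2 y3) (β (β v)) =
      θ (α (α y2)) (α (α y3)) (θ x1 y1 v) - θ (α (α y1)) (α (α y3)) (θ x1 y2 v) +
        Dop b α β ρ θ (α (α y1)) (α (α y2)) (θ x1 y3 v)

/-- 2-cocycle on a Hom-Lie algebra with coefficients in a representation. -/
structure Is2CocycleLie (b : A → A → A) (α : A → A) (ρ : A → V → V) (β : V → V)
    (F : A → A → V) : Prop where
  bilin : IsBilin K F
  skew : ∀ x y, F x y = - F y x
  cocycle : ∀ x y z,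
    (ρ (α x) (F y z) + F (α x) (b y z)) + (ρ (α y) (F z x) + F (α y) (b z x)) +
      (ρ (α z) (F x y) + F (α z) (b x y)) = 0

/-- (2,3)-cocycle of a Hom-Lie-Yamaguti algebra. -/
structure Is23Cocycle (b : A → A → A) (t : A → A → A → A) (α : A → A)
    (ρ : A → V → V) (θ : A → A → V → V) (β : V → V)
    (F : A → A → V) (G : A → A → A → V) : Prop where
  bilinF : IsBilin K F
  trilinG : IsTrilin K G
  skewF : ∀ x y, F x y = - F y x
  skewG : ∀ x y z, G x y z = - G y x z
  compatF : ∀ x y, F (α x) (α y) = β (F x y)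
  compatG : ∀ x y z, G (α x) (α y) (α z) = β (G x y z)
  c1 : ∀ x y z,
    (F (b x y) (α z) - ρ (α x) (F y z) + G x y z) +
      (F (b y z) (α x) - ρ (α y) (F z x) + G y z x) +
      (F (b z x) (α y) - ρ (α z) (F x y) + G z x y) = 0
  c2 : ∀ x y z w,
    (θ (α x) (α w) (F y z) + G (b x y) (α z) (α w)) +
      (θ (α y) (α w) (F z x) + G (b y z) (α x) (α w)) +
      (θ (α z) (α w) (F x y) + G (b z x) (α y) (α w)) = 0
  c3 : ∀ x y z w,
    Dop b α β ρ θ (α x) (α y) (F z w) + ρ (α (α w)) (G x y z) - F (t x y z) (α (α w)) +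
      G (α x) (α y) (b z w) - ρ (α (α z)) (G x y w) - F (α (α z)) (t x y w) = 0
  c4 : ∀ x1 x2 x3 x4 z,
    θ (α (α x4)) (α (α z)) (G x1 x2 x3) - θ (α (α x3)) (α (α z)) (G x1 x2 x4) +
      Dop b α β ρ θ (α (α x1)) (α (α x2)) (G x3 x4 z) -
      Dop b α β ρ θ (α (α x3)) (α (α x4)) (G x1 x2 z) -
      G (t x1 x2 x3) (α (α x4)) (α (α z)) - G (α (α x3)) (t x1 x2 x4) (α (α z)) +
      G (α (α x1)) (α (α x2)) (t x3 x4 z) - G (α (α x3)) (α (α x4)) (t x1 x2 z) = 0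

/-- (F,G)-twisted O-operator on a Hom-Lie-Yamaguti algebra. -/
structure IsTwistedO (b : A → A → A) (t : A → A → A → A) (α : A → A)
    (ρ : A → V → V) (θ : A → A → V → V) (β : V → V)
    (F : A → A → V) (G : A → A → A → V) (T : V → A) : Prop where
  lin : IsLinearMap K T
  comm : ∀ u, T (β u) = α (T u)
  bin : ∀ u v, b (T u) (T v) = T (ρ (T u) v - ρ (T v) u + F (T u) (T v))
  tern : ∀ u v w, t (T u) (T v) (T w) =
    T (Dop b α β ρ θ (T u) (T v) w + θ (T v) (T w) u - θ (T u) (T w) v +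
        G (T u) (T v) (T w))

/-- F-twisted O-operator on a Hom-Lie algebra. -/
structure IsTwistedOLie (b : A → A → A) (α : A → A) (ρ : A → V → V) (β : V → V)
    (F : A → A → V) (T : V → A) : Prop where
  lin : IsLinearMap K T
  comm : ∀ u, T (β u) = α (T u)
  bin : ∀ u v, b (T u) (T v) = T (ρ (T u) v - ρ (T v) u + F (T u) (T v))

/-- (λ,μ)-weighted Reynolds operator on a Hom-Lie-Yamaguti algebra. -/
structure IsReynolds (b : A → A → A) (t : A → A → A → A) (α : A → A)
    (lam mu : K) (R : A → A) : Prop where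
  lin : IsLinearMap K R
  comm : ∀ x, R (α x) = α (R x)
  bin : ∀ x y, b (R x) (R y) = R (b (R x) y + b x (R y) + lam • b (R x) (R y))
  tern : ∀ x y z, t (R x) (R y) (R z) =
    R (t (R x) (R y) z + t (R x) y (R z) + t x (R y) (R z) + mu • t (R x) (R y) (R z))

/-- Rota-Baxter operator of weight zero on a Hom-Lie-Yamaguti algebra. -/
structure IsRotaBaxter (b : A → A → A) (t : A → A → A → A) (α : A → A)
    (R : A → A) : Prop where
  lin : IsLinearMap K R
  comm : ∀ x, R (α x) = α (R x)
  bin : ∀ x y, b (R x) (R y) = R (b (R x) y + b x (R y))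
  tern : ∀ x y z, t (R x) (R y) (R z) =
    R (t (R x) (R y) z + t (R x) y (R z) + t x (R y) (R z))

/-- λ-weighted Reynolds operator on a Hom-Lie algebra. -/
structure IsReynoldsLie (b : A → A → A) (α : A → A) (lam : K) (R : A → A) : Prop where
  lin : IsLinearMap K R
  comm : ∀ x, R (α x) = α (R x)
  bin : ∀ x y, b (R x) (R y) = R (b (R x) y + b x (R y) + lam • b (R x) (R y))

/-- The binary bracket induced by a twisted O-operator on `V`. -/
def bT (ρ : A → V → V) (F : A → A → V) (T : V → A) (u v : V) : V :=
  ρ (T u) v - ρ (T v) u + F (T u) (T v)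

/-- The ternary bracket induced by a twisted O-operator on `V`. -/
def tT (b : A → A → A) (α : A → A) (β : V → V) (ρ : A → V → V) (θ : A → A → V → V)
    (G : A → A → A → V) (T : V → A) (u v w : V) : V :=
  Dop b α β ρ θ (T u) (T v) w + θ (T v) (T w) u - θ (T u) (T w) v + G (T u) (T v) (T w)

/-- The map `ρ_T` of the representation of `(V,[·,·]_T,⟨·,·,·⟩_T,β)` on `A`. -/
def rhoT (b : A → A → A) (ρ : A → V → V) (F : A → A → V) (T : V → A)
    (u : V) (x : A) : A :=
  b (T u) x + T (ρ x u + F x (T u))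

/-- The map `θ_T` of the representation of `(V,[·,·]_T,⟨·,·,·⟩_T,β)` on `A`. -/
def thetaT (b : A → A → A) (t : A → A → A → A) (α : A → A) (β : V → V)
    (ρ : A → V → V) (θ : A → A → V → V) (G : A → A → A → V) (T : V → A)
    (u v : V) (x : A) : A :=
  t x (T u) (T v) - T (Dop b α β ρ θ x (T u) v - θ x (T v) u + G x (T u) (T v))

/-- The 1-coboundary `∂_T(χ)` associated to `χ ∈ A∧A`. -/
def partialT (b : A → A → A) (t : A → A → A → A) (α : A → A) (β : V → V)
    (ρ : A → V → V) (θ : A → A → V → V) (G : A → A → A → V)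
    (T : V → A) (χ : A × A) (u : V) : A :=
  T (Dop b α β ρ θ χ.1 χ.2 u + G χ.1 χ.2 (T u)) - t χ.1 χ.2 (T u)

/-- Formal deformation of a twisted O-operator, encoded by its coefficients. -/
def IsFormalDef (b : A → A → A) (t : A → A → A → A) (α : A → A)
    (ρ : A → V → V) (θ : A → A → V → V) (β : V → V)
    (F : A → A → V) (G : A → A → A → V) (S : ℕ → V → A) : Prop :=
  (∀ s, IsLinearMap K (S s)) ∧
  (∀ s u, S s (β u) = α (S s u)) ∧
  (∀ s u v, ∑ p ∈ Finset.HasAntidiagonal.antidiagonal s, b (S p.1 u) (S p.2 v) =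
    (∑ p ∈ Finset.HasAntidiagonal.antidiagonal s, S p.1 (ρ (S p.2 u) v - ρ (S p.2 v) u)) +
    ∑ p ∈ Finset.HasAntidiagonal.antidiagonal s, ∑ q ∈ Finset.HasAntidiagonal.antidiagonal p.2,
      S p.1 (F (S q.1 u) (S q.2 v))) ∧
  (∀ s u v w,
    ∑ p ∈ Finset.HasAntidiagonal.antidiagonal s, ∑ q ∈ Finset.HasAntidiagonal.antidiagonal p.2,
      t (S p.1 u) (S q.1 v) (S q.2 w) =
    (∑ p ∈ Finset.HasAntidiagonal.antidiagonal s, ∑ q ∈ Finset.HasAntidiagonal.antidiagonal p.2,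
      S p.1 (Dop b α β ρ θ (S q.1 u) (S q.2 v) w + θ (S q.1 v) (S q.2 w) u -
        θ (S q.1 u) (S q.2 w) v)) +
    ∑ p ∈ Finset.HasAntidiagonal.antidiagonal s, ∑ q ∈ Finset.HasAntidiagonal.antidiagonal p.2,
      ∑ r ∈ Finset.HasAntidiagonal.antidiagonal q.2,
        S p.1 (G (S q.1 u) (S r.1 v) (S r.2 w)))

/-- `x * y = x∘y − y∘x + x⋎y`, the sub-adjacent binary bracket of an NS-structure. -/
def nsStar (circ vee : A → A → A) (x y : A) : A := circ x y - circ y x + vee x y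

/-- `{x,y,z}^∧` of an NS-Hom-Lie-Yamaguti algebra. -/
def nsHat (circ vee : A → A → A) (br : A → A → A → A) (α : A → A) (x y z : A) : A :=
  br z y x - br z x y + circ (α x) (circ y z) - circ (α y) (circ x z) -
    circ (nsStar circ vee x y) (α z)

/-- `⟨x,y,z⟩`, the sub-adjacent ternary bracket of an NS-structure. -/
def nsAng (circ vee : A → A → A) (br sq : A → A → A → A) (α : A → A) (x y z : A) : A :=
  nsHat circ vee br α x y z + br x y z - br y x z + sq x y z

/-- NS-Hom-Lie-Yamaguti algebra. -/
structure IsNSHLY (circ vee : A → A → A) (br sq : A → A → A → A) (α : A → A) : Prop where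
  linα : IsLinearMap K α
  lincirc : IsBilin K circ
  linvee : IsBilin K vee
  linbr : IsTrilin K br
  linsq : IsTrilin K sq
  skewvee : ∀ x y, vee x y = - vee y x
  ns1 : ∀ x1 x2 x3,
    (vee (nsStar circ vee x1 x2) (α x3) - circ (α x1) (vee x2 x3) + sq x1 x2 x3) +
    (vee (nsStar circ vee x2 x3) (α x1) - circ (α x2) (vee x3 x1) + sq x2 x3 x1) +
    (vee (nsStar circ vee x3 x1) (α x2) - circ (α x3) (vee x1 x2) + sq x3 x1 x2) = 0
  ns2 : ∀ x1 x2 x3 x4,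
    (br (vee x2 x3) (α x1) (α x4) + sq (nsStar circ vee x1 x2) (α x3) (α x4)) +
    (br (vee x3 x1) (α x2) (α x4) + sq (nsStar circ vee x2 x3) (α x1) (α x4)) +
    (br (vee x1 x2) (α x3) (α x4) + sq (nsStar circ vee x3 x1) (α x2) (α x4)) = 0
  ns3 : ∀ x1 x2 x3 x4,
    br (nsStar circ vee x1 x2) (α x3) (α x4) + br (nsStar circ vee x2 x3) (α x1) (α x4) +
      br (nsStar circ vee x3 x1) (α x2) (α x4) = 0
  ns4 : ∀ x1 x2 x3 x4,
    br (α x4) (nsStar circ vee x1 x2) (α x3) =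
      br (circ x2 x4) (α x1) (α x3) - br (circ x1 x4) (α x2) (α x3)
  ns5 : ∀ x1 x2 x3 x4,
    nsHat circ vee br α (α x1) (α x2) (circ x3 x4) =
      circ (α (α x3)) (nsHat circ vee br α x1 x2 x4) +
        circ (nsAng circ vee br sq α x1 x2 x3) (α (α x4))
  ns6 : ∀ x1 x2 x3 x4,
    br (α x4) (α x1) (nsStar circ vee x2 x3) =
      circ (α (α x2)) (br x4 x1 x3) - circ (α (α x3)) (br x4 x1 x2)
  ns7 : ∀ x1 x2 x3 x4 x5,
    nsHat circ vee br α (α (α x1)) (α (α x2)) (br x5 x3 x4) =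
      br (nsHat circ vee br α x1 x2 x5) (α (α x3)) (α (α x4)) +
        br (α (α x5)) (nsAng circ vee br sq α x1 x2 x3) (α (α x4)) +
        br (α (α x5)) (α (α x3)) (nsAng circ vee br sq α x1 x2 x4)
  ns8 : ∀ x1 x2 x3 x4 x5,
    br (α (α x5)) (α (α x1)) (nsAng circ vee br sq α x2 x3 x4) =
      br (br x5 x1 x2) (α (α x3)) (α (α x4)) - br (br x5 x1 x3) (α (α x2)) (α (α x4)) +
        nsHat circ vee br α (α (α x2)) (α (α x3)) (br x5 x1 x4)
  ns9 : ∀ x1 x2 x3 x4,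
    nsHat circ vee br α (α x1) (α x2) (vee x3 x4) +
      circ (α (α x4)) (sq x1 x2 x3) - vee (nsAng circ vee br sq α x1 x2 x3) (α (α x4)) +
      sq (α x1) (α x2) (nsStar circ vee x3 x4) - circ (α (α x3)) (sq x1 x2 x4) -
      vee (α (α x3)) (nsAng circ vee br sq α x1 x2 x4) = 0
  ns10 : ∀ x1 x2 x3 x4 x5,
    nsHat circ vee br α (sq x1 x2 x3) (α (α x4)) (α (α x5)) -
      br (sq x1 x2 x4) (α (α x3)) (α (α x5)) +
      nsHat circ vee br α (sq x3 x4 x5) (α (α x1)) (α (α x2)) -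
      nsHat circ vee br α (sq x1 x2 x5) (α (α x3)) (α (α x4)) -
      sq (nsAng circ vee br sq α x1 x2 x3) (α (α x4)) (α (α x5)) -
      sq (α (α x3)) (nsAng circ vee br sq α x1 x2 x4) (α (α x5)) +
      sq (α (α x1)) (α (α x2)) (nsAng circ vee br sq α x3 x4 x5) -
      sq (α (α x3)) (α (α x4)) (nsAng circ vee br sq α x1 x2 x5) = 0

/-- NS-Hom-Lie algebra. -/
structure IsNSHomLie (circ vee : A → A → A) (α : A → A) : Prop where
  linα : IsLinearMap K α
  lincirc : IsBilin K circ
  linvee : IsBilin K vee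
  skewvee : ∀ x y, vee x y = - vee y x
  nsl1 : ∀ x y z,
    circ (nsStar circ vee x y) (α z) - circ (α x) (circ y z) + circ (α y) (circ x z) = 0
  nsl2 : ∀ x y z,
    vee (α x) (nsStar circ vee y z) + vee (α y) (nsStar circ vee z x) +
      vee (α z) (nsStar circ vee x y) +
      circ (α x) (vee y z) + circ (α y) (vee z x) + circ (α z) (vee x y) = 0

/-- A multiplicative Hom-Lie algebra with `⟨x,y,z⟩ = [[x,y],α z]` is a
multiplicative Hom-Lie-Yamaguti algebra. -/
theorem induced_multHLY (b : A → A → A) (α : A → A) (h : IsMultHomLie K b α) :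
    IsMultHLY K b (fun x y z => b (b x y) (α z)) α := by
  obtain ⟨⟨hlin, ⟨hb1, hb2⟩, hskew, hjac⟩, hmult⟩ := h
  have hadd1 : ∀ a a' c, b (a + a') c = b a c + b a' c := fun a a' c => (hb1 c).map_add a a'
  have hadd2 : ∀ a c c', b a (c + c') = b a c + b a c' := fun a c c' => (hb2 a).map_add c c'
  have hsmul1 : ∀ (r : K) a c, b (r • a) c = r • b a c := fun r a c => (hb1 c).map_smul r a
  have hsmul2 : ∀ a (r : K) c, b a (r • c) = r • b a c := fun a r c => (hb2 a).map_smul r c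
  have hzero1 : ∀ c, b 0 c = 0 := fun c => (hb1 c).map_zero
  have hneg1 : ∀ a c, b (-a) c = - b a c := fun a c => (hb1 c).map_neg a
  have hneg2 : ∀ a c, b a (-c) = - b a c := fun a c => (hb2 a).map_neg c
  have hS : ∀ x y z, b (b x y) (α z) + b (b y z) (α x) + b (b z x) (α y) = 0 := by
    intro x y z
    have e := hjac x y z
    rw [hskew (b x y) (α z), hskew (b y z) (α x), hskew (b z x) (α y)]
    linear_combination (norm := abel) -e
  refine ⟨⟨hlin, ⟨hb1, hb2⟩, ⟨?_, ?_, ?_⟩, hskew, ?_, ?_, ?_, ?_, ?_⟩, hmult, ?_⟩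
  · -- linear in first arg
    intro y z
    exact ⟨fun a a' => by dsimp only; rw [hadd1, hadd1],
           fun r a => by dsimp only; rw [hsmul1, hsmul1]⟩
  · -- linear in second arg
    intro x z
    exact ⟨fun a a' => by dsimp only; rw [hadd2, hadd1],
           fun r a => by dsimp only; rw [hsmul2, hsmul1]⟩
  · -- linear in third arg
    intro x y
    exact ⟨fun a a' => by dsimp only; rw [hlin.map_add, hadd2],
           fun r a => by dsimp only; rw [hlin.map_smul, hsmul2]⟩
  · -- skew₃
    intro x y z
    rw [hskew x y, hneg1]
  · -- ly1
    intro x y z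
    rw [hS, add_zero]
  · -- ly2
    intro x y z w
    rw [← hadd1, ← hadd1, hS, hzero1]
  · -- ly3
    intro x y z w
    rw [← hmult x y, hmult z w]
    have e := hjac (b x y) (α z) (α w)
    have s1 : b (α (α z)) (b (α w) (b x y)) = - b (α (α z)) (b (b x y) (α w)) := by
      rw [hskew (α w) (b x y), hneg2]
    have s2 : b (α (α w)) (b (b x y) (α z)) = - b (b (b x y) (α z)) (α (α w)) :=
      hskew _ _
    linear_combination (norm := abel) e - s1 - s2
  · -- ly4
    intro x y z w u
    rw [← hmult (α x) (α y), ← hmult x y, hmult (b z w) (α u), hmult z w,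
      ← hmult (α z) (α w), hmult (b x y) (α u)]
    have e1 := hjac (α (b x y)) (b (α z) (α w)) (α (α u))
    have e2 := hjac (b x y) (α z) (α w)
    have s3 : b (α (α z)) (b (α w) (b x y)) = - b (α (α z)) (b (b x y) (α w)) := by
      rw [hskew (α w) (b x y), hneg2]
    have s4 : b (α (α w)) (b (b x y) (α z)) = - b (b (b x y) (α z)) (α (α w)) :=
      hskew _ _
    have e2' : b (α (b x y)) (b (α z) (α w)) =
        b (b (b x y) (α z)) (α (α w)) + b (α (α z)) (b (b x y) (α w)) := by
      linear_combination (norm := abel) e2 - s3 - s4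
    have e3 : b (b (α (b x y)) (b (α z) (α w))) (α (α (α u))) =
        b (b (b (b x y) (α z)) (α (α w))) (α (α (α u))) +
          b (b (α (α z)) (b (b x y) (α w))) (α (α (α u))) := by
      rw [e2', hadd1]
    have s1 : b (α (b (α z) (α w))) (b (α (α u)) (α (b x y))) =
        - b (α (b (α z) (α w))) (b (α (b x y)) (α (α u))) := by
      rw [hskew (α (α u)) (α (b x y)), hneg2]
    have s2 : b (α (α (α u))) (b (α (b x y)) (b (α z) (α w))) =
        - b (b (α (b x y)) (b (α z) (α w))) (α (α (α u))) := hskew _ _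
    linear_combination (norm := abel) e1 - s1 - s2 + e3
  · -- mult₃
    intro x y z
    rw [hmult, hmult]

end HLYPaper
end

section
/- Let (A, [·,·], ⟨·,·,·⟩) be a Lie-Yamaguti algebra and α : A → A an algebra morphism (preserving both brackets). Then (A, α∘[·,·], α²∘⟨·,·,·⟩, α) is a multiplicative Hom-Lie-Yamaguti algebra. -/
namespace HLYPaper

variable (K : Type*) [CommRing K]
variable {A V : Type*} [AddCommGroup A] [Module K A] [AddCommGroup V] [Module K V]

/-- twisting a Lie-Yamaguti algebra by an algebra morphism `α` gives a
multiplicative Hom-Lie-Yamaguti algebra. -/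
theorem twist_LY_by_morphism (b : A → A → A) (t : A → A → A → A) (α : A → A)
    (h : IsHLY K b t (id : A → A)) (hα : IsLinearMap K α)
    (hb : ∀ x y, α (b x y) = b (α x) (α y))
    (ht : ∀ x y z, α (t x y z) = t (α x) (α y) (α z)) :
    IsMultHLY K (fun x y => α (b x y)) (fun x y z => α (α (t x y z))) α := by
  have h0 : α 0 = 0 := by
    have := hα.map_smul 0 0; simpa using this
  have hadd := hα.map_add
  have hneg : ∀ x : A, α (-x) = - α x := by
    intro x; have := hα.map_smul (-1 : K) x; simpa using this
  have e2 := h.ly1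
  refine ⟨⟨hα, ?_, ?_, ?_, ?_, ?_, ?_, ?_, ?_⟩, ?_, ?_⟩
  · exact ⟨fun y => ⟨fun u v => by simp only [(h.bilin.1 y).map_add, hadd],
      fun c u => by simp only [(h.bilin.1 y).map_smul, hα.map_smul]⟩,
      fun x => ⟨fun u v => by simp only [(h.bilin.2 x).map_add, hadd],
      fun c u => by simp only [(h.bilin.2 x).map_smul, hα.map_smul]⟩⟩
  · refine ⟨fun y z => ⟨fun u v => ?_, fun c u => ?_⟩,
      fun x z => ⟨fun u v => ?_, fun c u => ?_⟩,
      fun x y => ⟨fun u v => ?_, fun c u => ?_⟩⟩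
    · simp only [(h.trilin.1 y z).map_add, hadd, hadd]
    · simp only [(h.trilin.1 y z).map_smul, hα.map_smul, hα.map_smul]
    · simp only [(h.trilin.2.1 x z).map_add, hadd, hadd]
    · simp only [(h.trilin.2.1 x z).map_smul, hα.map_smul, hα.map_smul]
    · simp only [(h.trilin.2.2 x y).map_add, hadd, hadd]
    · simp only [(h.trilin.2.2 x y).map_smul, hα.map_smul, hα.map_smul]
  · intro x y; rw [h.skew₂ x y, hneg]
  · intro x y z; rw [h.skew₃ x y z, hneg, hneg]
  · intro x y z
    have e := h.ly1 x y z; simp only [id_eq] at e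
    calc α (b (α (b x y)) (α z)) + α (b (α (b y z)) (α x)) + α (b (α (b z x)) (α y)) +
          (α (α (t x y z)) + α (α (t y z x)) + α (α (t z x y)))
        = α (α (b (b x y) z + b (b y z) x + b (b z x) y + (t x y z + t y z x + t z x y))) := by
          simp only [hadd, hb]
      _ = 0 := by rw [e, h0, h0]
  · intro x y z w
    have e := h.ly2 x y z w; simp only [id_eq] at e
    calc α (α (t (α (b x y)) (α z) (α w))) + α (α (t (α (b y z)) (α x) (α w))) +
          α (α (t (α (b z x)) (α y) (α w)))
        = α (α (α (t (b x y) z w + t (b y z) x w + t (b z x) y w))) := by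
          simp only [hadd, ht, hb]
      _ = 0 := by rw [e, h0, h0, h0]
  · intro x y z w
    have e := h.ly3 x y z w; simp only [id_eq] at e
    calc α (α (t (α x) (α y) (α (b z w))))
        = α (α (α (t x y (b z w)))) := by simp only [ht, hb]
      _ = α (α (α (b (t x y z) w + b z (t x y w)))) := by rw [e]
      _ = α (b (α (α (t x y z))) (α (α w))) + α (b (α (α z)) (α (α (t x y w)))) := by
          simp only [hadd, hb]
  · intro x y z w u
    have e := h.ly4 x y z w u; simp only [id_eq] at e
    calc α (α (t (α (α x)) (α (α y)) (α (α (t z w u)))))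
        = α (α (α (α (t x y (t z w u))))) := by simp only [ht]
      _ = α (α (α (α (t (t x y z) w u + t z (t x y w) u + t z w (t x y u))))) := by rw [e]
      _ = α (α (t (α (α (t x y z))) (α (α w)) (α (α u)))) +
          α (α (t (α (α z)) (α (α (t x y w))) (α (α u)))) +
          α (α (t (α (α z)) (α (α w)) (α (α (t x y u))))) := by
          simp only [hadd, ht]
  · intro x y; rw [hb]
  · intro x y z; rw [ht, ht]

end HLYPaper
end

section
/- Let (A,[·,·],α) be a multiplicative Hom-Lie algebra with representation (V,ρ,β), and let F: A×A → V be a skew-symmetric 2-cocycle (i.e., the cyclic sum over (x,y,z) of ρ(α(x))F(y,z) + F(α(x),[y,z]) vanishes). Define G(x,y,z) = F([x,y],α(z)) − ρ(α(z))F(x,y). Then the pair (F,G) satisfies the first (2,3)-cocycle identity of the induced Hom-Lie-Yamaguti algebra (A,[·,·],⟨·,·,·⟩,α) with ⟨x,y,z⟩ = [[x,y],α(z)] and representation (V,ρ,θ_ρ,β): the cyclic sum over (x,y,z) of F([x,y],α(z)) − ρ(α(x))F(y,z) + G(x,y,z) vanishes. -/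
namespace HLYPaper

variable (K : Type*) [CommRing K]
variable {A V : Type*} [AddCommGroup A] [Module K A] [AddCommGroup V] [Module K V]

/-- a Hom-Lie 2-cocycle `F` together with
`G(x,y,z) = F([x,y],α z) − ρ(α z) F(x,y)` satisfies the first (2,3)-cocycle identity of
the induced Hom-Lie-Yamaguti algebra. -/
theorem cocycle23_first_identity (b : A → A → A) (α : A → A) (ρ : A → V → V) (β : V → V)
    (F : A → A → V) (h : IsMultHomLie K b α) (hr : IsHomLieRep K b α ρ β)
    (hF : Is2CocycleLie K b α ρ β F) :
    ∀ x y z : A,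
      (F (b x y) (α z) - ρ (α x) (F y z) + (F (b x y) (α z) - ρ (α z) (F x y))) +
      (F (b y z) (α x) - ρ (α y) (F z x) + (F (b y z) (α x) - ρ (α x) (F y z))) +
      (F (b z x) (α y) - ρ (α z) (F x y) + (F (b z x) (α y) - ρ (α y) (F z x))) = 0 := by
  intro x y z
  have hc := hF.cocycle x y z
  rw [hF.skew (α x) (b y z), hF.skew (α y) (b z x), hF.skew (α z) (b x y)] at hc
  have h2 :
      (F (b x y) (α z) - ρ (α x) (F y z) + (F (b x y) (α z) - ρ (α z) (F x y))) +
      (F (b y z) (α x) - ρ (α y) (F z x) + (F (b y z) (α x) - ρ (α x) (F y z))) +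
      (F (b z x) (α y) - ρ (α z) (F x y) + (F (b z x) (α y) - ρ (α y) (F z x))) =
      -(((ρ (α x) (F y z) + -F (b y z) (α x)) + (ρ (α y) (F z x) + -F (b z x) (α y)) +
        (ρ (α z) (F x y) + -F (b x y) (α z))) +
        ((ρ (α x) (F y z) + -F (b y z) (α x)) + (ρ (α y) (F z x) + -F (b z x) (α y)) +
        (ρ (α z) (F x y) + -F (b x y) (α z)))) := by abel
  rw [h2, hc]
  simp

end HLYPaper
end

section
/- Let R: A → A be a λ-weighted Reynolds operator on a multiplicative Hom-Lie algebra (A,[·,·],α) (i.e., R∘α = α∘R and [Rx,Ry] = R([Rx,y] + [x,Ry] + λ[Rx,Ry])). Then R is a (λ,2λ)-weighted Reynolds operator on the induced Hom-Lie-Yamaguti algebra with ternary bracket ⟨x,y,z⟩ = [[x,y],α(z)]. -/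
namespace HLYPaper

variable (K : Type*) [CommRing K]
variable {A V : Type*} [AddCommGroup A] [Module K A] [AddCommGroup V] [Module K V]

/-- a λ-weighted Reynolds operator on a multiplicative Hom-Lie algebra is a
(λ,2λ)-weighted Reynolds operator on the induced Hom-Lie-Yamaguti algebra. -/
theorem reynolds_on_induced (b : A → A → A) (α : A → A) (lam : K) (R : A → A)
    (h : IsMultHomLie K b α) (hR : IsReynoldsLie K b α lam R) :
    IsReynolds K b (fun x y z => b (b x y) (α z)) α lam (2 * lam) R := by
  refine ⟨hR.lin, hR.comm, hR.bin, ?_⟩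
  intro x y z
  have badd : ∀ u v w, b (u + v) w = b u w + b v w := fun u v w =>
    (h.bilin.1 w).map_add u v
  have bsmul : ∀ (c : K) u w, b (c • u) w = c • b u w := fun c u w =>
    (h.bilin.1 w).map_smul c u
  have RS : R (b (R x) y + b x (R y) + lam • b (R x) (R y)) = b (R x) (R y) :=
    (hR.bin x y).symm
  have e1 : b (b (R x) (R y)) (α (R z)) =
      R (b (b (R x) (R y)) (α z)
        + (b (b (R x) y) (α (R z)) + b (b x (R y)) (α (R z))
            + lam • b (b (R x) (R y)) (α (R z)))
        + lam • b (b (R x) (R y)) (α (R z))) := by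
    conv_lhs => rw [← RS, ← hR.comm z, hR.bin]
    rw [RS, hR.comm, badd, badd, bsmul]
  conv_lhs => rw [e1]
  congr 1
  rw [two_mul, add_smul]
  abel

end HLYPaper
end

section
/- Let T: V → A be an F-twisted O-operator on a multiplicative Hom-Lie algebra (A,[·,·],α) with respect to a Hom-Lie representation (V,ρ,β) and a 2-cocycle F. Then T is an (F,G)-twisted O-operator on the induced Hom-Lie-Yamaguti algebra (A,[·,·],⟨·,·,·⟩,α) with ⟨x,y,z⟩ = [[x,y],α(z)], with respect to the representation (V,ρ,θ_ρ,β) where θ_ρ(x,y) = ρ(α(y))ρ(x), and with G(x,y,z) = F([x,y],α(z)) − ρ(α(z))F(x,y). -/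
namespace HLYPaper

variable (K : Type*) [CommRing K]
variable {A V : Type*} [AddCommGroup A] [Module K A] [AddCommGroup V] [Module K V]

/-- an F-twisted O-operator on a multiplicative Hom-Lie algebra is an
(F,G)-twisted O-operator on the induced Hom-Lie-Yamaguti algebra, with
`θ_ρ(x,y) = ρ(α y)ρ(x)` and `G(x,y,z) = F([x,y],α z) − ρ(α z)F(x,y)`. -/
theorem twistedO_on_induced (b : A → A → A) (α : A → A) (ρ : A → V → V) (β : V → V)
    (F : A → A → V) (T : V → A) (h : IsMultHomLie K b α) (hr : IsHomLieRep K b α ρ β)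
    (hF : Is2CocycleLie K b α ρ β F) (hT : IsTwistedOLie K b α ρ β F T) :
    IsTwistedO K b (fun x y z => b (b x y) (α z)) α ρ
      (fun x y v => ρ (α y) (ρ x v)) β F
      (fun x y z => F (b x y) (α z) - ρ (α z) (F x y)) T := by
  refine ⟨hT.lin, hT.comm, hT.bin, ?_⟩
  intro u v w
  have hz : α (T w) = T (β w) := (hT.comm w).symm
  have hm : b (T u) (T v) = T (ρ (T u) v - ρ (T v) u + F (T u) (T v)) := hT.bin u v
  calc b (b (T u) (T v)) (α (T w))
      = b (T (ρ (T u) v - ρ (T v) u + F (T u) (T v))) (T (β w)) := by rw [← hm, ← hz]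
    _ = T (ρ (T (ρ (T u) v - ρ (T v) u + F (T u) (T v))) (β w) -
          ρ (T (β w)) (ρ (T u) v - ρ (T v) u + F (T u) (T v)) +
          F (T (ρ (T u) v - ρ (T v) u + F (T u) (T v))) (T (β w))) := hT.bin _ _
    _ = T (ρ (b (T u) (T v)) (β w) -
          ρ (α (T w)) (ρ (T u) v - ρ (T v) u + F (T u) (T v)) +
          F (b (T u) (T v)) (α (T w))) := by rw [← hm, ← hz]
    _ = _ := by
          congr 1
          simp only [Dop]
          rw [hr.rep]
          have h1 := (hr.linρ' (α (T w))).map_add (ρ (T u) v - ρ (T v) u)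
            (F (T u) (T v))
          have h2 := (hr.linρ' (α (T w))).map_sub (ρ (T u) v) (ρ (T v) u)
          rw [h1, h2]
          abel

end HLYPaper
end

section
/- Let T_t = Σ_{i≥0} T_i t^i with T_0 = T be a formal deformation of an (F,G)-twisted O-operator T on a Hom-Lie-Yamaguti algebra. Then the linear term T_1 satisfies: β∘T_1 = T_1∘α; [T_1 u, Tv] + [Tu, T_1 v] = T_1(ρ(Tu)v − ρ(Tv)u) + T(ρ(T_1 u)v − ρ(T_1 v)u) + T_1 F(Tu,Tv) + T F(T_1 u, Tv) + T F(Tu, T_1 v); and the analogous ternary identity; i.e., T_1 is a 1-cocycle in the cohomology of the twisted O-operator T. -/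
namespace HLYPaper

variable (K : Type*) [CommRing K]
variable {A V : Type*} [AddCommGroup A] [Module K A] [AddCommGroup V] [Module K V]

/-- the linear coefficient `T₁` of a formal deformation of a twisted
O-operator satisfies the 1-cocycle identities. -/
theorem infinitesimal_is_cocycle (b : A → A → A) (t : A → A → A → A) (α : A → A)
    (ρ : A → V → V) (θ : A → A → V → V) (β : V → V) (F : A → A → V) (G : A → A → A → V)
    (h : IsHLY K b t α) (hr : IsHLYRep K b t α ρ θ β)
    (hc : Is23Cocycle K b t α ρ θ β F G) (T : V → A)
    (hT : IsTwistedO K b t α ρ θ β F G T) (S : ℕ → V → A) (hS0 : S 0 = T)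
    (hdef : IsFormalDef K b t α ρ θ β F G S) :
    (∀ u, S 1 (β u) = α (S 1 u)) ∧
    (∀ u v, b (S 1 u) (T v) + b (T u) (S 1 v) =
      S 1 (ρ (T u) v - ρ (T v) u) + T (ρ (S 1 u) v - ρ (S 1 v) u) +
        S 1 (F (T u) (T v)) + T (F (S 1 u) (T v)) + T (F (T u) (S 1 v))) ∧
    ∀ u v w,
      t (S 1 u) (T v) (T w) + t (T u) (S 1 v) (T w) + t (T u) (T v) (S 1 w) =
        S 1 (Dop b α β ρ θ (T u) (T v) w + θ (T v) (T w) u - θ (T u) (T w) v) +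
          T (Dop b α β ρ θ (S 1 u) (T v) w + θ (S 1 v) (T w) u - θ (S 1 u) (T w) v) +
          T (Dop b α β ρ θ (T u) (S 1 v) w + θ (T v) (S 1 w) u - θ (T u) (S 1 w) v) +
          S 1 (G (T u) (T v) (T w)) + T (G (S 1 u) (T v) (T w)) +
          T (G (T u) (S 1 v) (T w)) + T (G (T u) (T v) (S 1 w)) := by
  obtain ⟨hlin, hcomm, hbin, htern⟩ := hdef
  refine ⟨fun u => hcomm 1 u, fun u v => ?_, fun u v w => ?_⟩
  · have h1 := hbin 1 u v
    simp only [Finset.Nat.sum_antidiagonal_eq_sum_range_succ_mk, Finset.sum_range_succ,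
      Finset.sum_range_zero, Nat.sub_self, Nat.sub_zero, zero_add, hS0] at h1
    linear_combination (norm := abel) h1
  · have h1 := htern 1 u v w
    simp only [Finset.Nat.sum_antidiagonal_eq_sum_range_succ_mk, Finset.sum_range_succ,
      Finset.sum_range_zero, Nat.sub_self, Nat.sub_zero, zero_add, hS0] at h1
    linear_combination (norm := abel) h1

end HLYPaper
end

section
/- Let (A, ∘, ⋎, α) be an NS-Hom-Lie algebra. Then the bracket [x,y] = x∘y − y∘x + x⋎y makes (A, [·,·], α) a Hom-Lie algebra. -/
namespace HLYPaper

variable (K : Type*) [CommRing K]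
variable {A V : Type*} [AddCommGroup A] [Module K A] [AddCommGroup V] [Module K V]

/-- the adjacent bracket of an NS-Hom-Lie algebra is a Hom-Lie algebra. -/
theorem NSHomLie_adjacent (circ vee : A → A → A) (α : A → A)
    (h : IsNSHomLie K circ vee α) :
    IsHomLie K (nsStar circ vee) α := by
  have hcirc2 : ∀ a p q r, circ a (p - q + r) = circ a p - circ a q + circ a r := by
    intro a p q r
    rw [(h.lincirc.2 a).map_add, (h.lincirc.2 a).map_sub]
  have hA : ∀ x y z, circ (nsStar circ vee x y) (α z) =
      circ (α x) (circ y z) - circ (α y) (circ x z) := by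
    intro x y z
    have h0 := h.nsl1 x y z
    rw [← sub_eq_zero]
    rw [show circ (nsStar circ vee x y) (α z) - (circ (α x) (circ y z) - circ (α y) (circ x z))
        = circ (nsStar circ vee x y) (α z) - circ (α x) (circ y z) + circ (α y) (circ x z) by
      abel]
    exact h0
  refine ⟨h.linα, ⟨?_, ?_⟩, ?_, ?_⟩
  · intro y
    refine ⟨fun a b => ?_, fun c a => ?_⟩
    · show nsStar circ vee (a + b) y = nsStar circ vee a y + nsStar circ vee b y
      simp only [nsStar, (h.lincirc.1 y).map_add, (h.lincirc.2 y).map_add,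
        (h.linvee.1 y).map_add]
      abel
    · show nsStar circ vee (c • a) y = c • nsStar circ vee a y
      simp only [nsStar, (h.lincirc.1 y).map_smul, (h.lincirc.2 y).map_smul,
        (h.linvee.1 y).map_smul, smul_sub, smul_add]
  · intro x
    refine ⟨fun a b => ?_, fun c a => ?_⟩
    · show nsStar circ vee x (a + b) = nsStar circ vee x a + nsStar circ vee x b
      simp only [nsStar, (h.lincirc.2 x).map_add, (h.lincirc.1 x).map_add,
        (h.linvee.2 x).map_add]
      abel
    · show nsStar circ vee x (c • a) = c • nsStar circ vee x a
      simp only [nsStar, (h.lincirc.2 x).map_smul, (h.lincirc.1 x).map_smul,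
        (h.linvee.2 x).map_smul, smul_sub, smul_add]
  · intro x y
    show circ x y - circ y x + vee x y = -(circ y x - circ x y + vee y x)
    rw [h.skewvee x y]
    abel
  · intro x y z
    have e : ∀ a b : A, nsStar circ vee a b = circ a b - circ b a + vee a b := fun _ _ => rfl
    rw [e (α x) (nsStar circ vee y z), e (α y) (nsStar circ vee z x),
      e (α z) (nsStar circ vee x y), hA y z x, hA z x y, hA x y z]
    rw [show circ (α x) (nsStar circ vee y z)
        = circ (α x) (circ y z) - circ (α x) (circ z y) + circ (α x) (vee y z) from
      hcirc2 (α x) _ _ _]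
    rw [show circ (α y) (nsStar circ vee z x)
        = circ (α y) (circ z x) - circ (α y) (circ x z) + circ (α y) (vee z x) from
      hcirc2 (α y) _ _ _]
    rw [show circ (α z) (nsStar circ vee x y)
        = circ (α z) (circ x y) - circ (α z) (circ y x) + circ (α z) (vee x y) from
      hcirc2 (α z) _ _ _]
    have h2 := h.nsl2 x y z
    rw [← h2]
    abel

end HLYPaper
end

section
/- If T_t and T'_t are two equivalent formal deformations of an (F,G)-twisted O-operator T on a Hom-Lie-Yamaguti algebra, then their infinitesimals T_1 and T'_1 differ by a coboundary: T'_1(u) − T_1(u) = ∂_T(χ)(u) = T(D(χ)u + G(χ,Tu)) − [χ,Tu] for some χ ∈ A∧A; hence T_1 and T'_1 define the same class in the first cohomology group H^1_T(V,A). -/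
namespace HLYPaper

variable (K : Type*) [CommRing K]
variable {A V : Type*} [AddCommGroup A] [Module K A] [AddCommGroup V] [Module K V]

/-- the infinitesimals of two equivalent formal deformations of a twisted
O-operator differ by the coboundary `∂_T(χ)`, hence define the same cohomology class. -/
theorem equivalent_deformations_same_class (b : A → A → A) (t : A → A → A → A)
    (α : A → A) (ρ : A → V → V) (θ : A → A → V → V) (β : V → V)
    (F : A → A → V) (G : A → A → A → V)
    (h : IsHLY K b t α) (hr : IsHLYRep K b t α ρ θ β)
    (hc : Is23Cocycle K b t α ρ θ β F G) (T : V → A)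
    (hT : IsTwistedO K b t α ρ θ β F G T)
    (S S' : ℕ → V → A) (hS0 : S 0 = T) (hS'0 : S' 0 = T)
    (hd : IsFormalDef K b t α ρ θ β F G S) (hd' : IsFormalDef K b t α ρ θ β F G S')
    (χ : A × A) (Φ : ℕ → A → A) (Ψ : ℕ → V → V)
    (hΦ0 : Φ 0 = id) (hΨ0 : Ψ 0 = id)
    (hΦ1 : ∀ x, Φ 1 x = t χ.1 χ.2 x)
    (hΨ1 : ∀ u, Ψ 1 u = Dop b α β ρ θ χ.1 χ.2 u + G χ.1 χ.2 (T u))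
    (hmor : ∀ s u, ∑ p ∈ Finset.HasAntidiagonal.antidiagonal s, S p.1 (Ψ p.2 u) =
      ∑ p ∈ Finset.HasAntidiagonal.antidiagonal s, Φ p.1 (S' p.2 u)) :
    ∀ u, S' 1 u - S 1 u = partialT b t α β ρ θ G T χ u := by
  intro u
  have h1 := hmor 1 u
  have hA : Finset.HasAntidiagonal.antidiagonal 1 = {((0:ℕ),(1:ℕ)), (1,0)} := by decide
  rw [hA] at h1
  simp [Finset.sum_insert, hS0, hS'0, hΦ0, hΨ0, hΦ1, hΨ1] at h1
  simp only [partialT]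
  rw [sub_eq_sub_iff_add_eq_add]
  exact h1.symm

end HLYPaper
end
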